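/- Let X be a finite-dimensional smooth and strictly convex real Banach space and T : X → X a nonzero linear operator satisfying the Daugavet equation ‖I + T‖ = 1 + ‖T‖. Then X has a T-invariant subspace of codimension one. -/

import Mathlib

/-- Birkhoff-James orthogonality: `u ⊥_B v` iff `‖u + λ v‖ ≥ ‖u‖` for all real `λ`. -/
def BJOrth {E : Type*} [NormedAddCommGroup E] [NormedSpace ℝ E] (u v : E) : Prop :=
  ∀ l : ℝ, ‖u‖ ≤ ‖u + l • v‖

theorem stmt8 {X : Type*} [NormedAddCommGroup X] [NormedSpace ℝ X]
    [FiniteDimensional ℝ X] [StrictConvexSpace ℝ X]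
    (hsm : ∀ z : X, ‖z‖ = 1 → ∃! f : X →L[ℝ] ℝ, ‖f‖ = 1 ∧ f z = 1)
    (T : X →L[ℝ] X) (hT : T ≠ 0)
    (hDaug : ‖ContinuousLinearMap.id ℝ X + T‖ = 1 + ‖T‖) :
    ∃ H : Submodule ℝ X, (∀ h ∈ H, T h ∈ H) ∧ Module.finrank ℝ (X ⧸ H) = 1 := by
  have hXnt : Nontrivial X := by
    by_contra h
    rw [not_nontrivial_iff_subsingleton] at h
    exact hT (Subsingleton.elim _ _)
  set S := ContinuousLinearMap.id ℝ X + T with hSdef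
  -- norm attainment on the compact unit sphere
  obtain ⟨x, hx, hmax⟩ : ∃ x : X, ‖x‖ = 1 ∧ ∀ y : X, ‖y‖ = 1 → ‖S y‖ ≤ ‖S x‖ := by
    obtain ⟨x, hxmem, hmax⟩ := (isCompact_sphere (0 : X) 1).exists_isMaxOn
      (NormedSpace.sphere_nonempty.2 zero_le_one)
      ((continuous_norm.comp S.continuous).continuousOn)
    exact ⟨x, mem_sphere_zero_iff_norm.1 hxmem,
      fun y hy => hmax (mem_sphere_zero_iff_norm.2 hy)⟩
  have hTpos : 0 < ‖T‖ := norm_pos_iff.2 hT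
  have hSx : ‖S x‖ = ‖S‖ := by
    refine le_antisymm (by simpa [hx] using S.le_opNorm x) ?_
    refine S.opNorm_le_bound (norm_nonneg _) fun y => ?_
    rcases eq_or_ne y 0 with rfl | hy
    · simp
    · have hyn : ‖y‖ ≠ 0 := norm_ne_zero_iff.2 hy
      have h1 : ‖(‖y‖⁻¹ • y)‖ = 1 := by
        rw [norm_smul, norm_inv, norm_norm, inv_mul_cancel₀ hyn]
      have h2 := hmax _ h1
      rw [map_smul, norm_smul, norm_inv, norm_norm] at h2
      calc ‖S y‖ = ‖y‖ * (‖y‖⁻¹ * ‖S y‖) := by field_simp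
        _ ≤ ‖y‖ * ‖S x‖ := by
            exact mul_le_mul_of_nonneg_left h2 (norm_nonneg y)
        _ = ‖S x‖ * ‖y‖ := mul_comm _ _
  have hxT : ‖x + T x‖ = 1 + ‖T‖ := by
    have : S x = x + T x := rfl
    rw [← this, hSx, hSdef, hDaug]
  have hTx : ‖T x‖ = ‖T‖ := by
    have h1 : ‖T x‖ ≤ ‖T‖ := by simpa [hx] using T.le_opNorm x
    have h2 : 1 + ‖T‖ ≤ ‖x‖ + ‖T x‖ := hxT ▸ norm_add_le x (T x)
    rw [hx] at h2
    linarith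
  have hray : SameRay ℝ x (T x) := by
    rw [sameRay_iff_norm_add, hx, hTx, hxT]
  have heig : T x = ‖T‖ • x := by
    have := sameRay_iff_norm_smul_eq.1 hray
    rw [hx, hTx, one_smul] at this
    exact this
  -- the operator T - ‖T‖ • id is not injective, hence not surjective
  set L : X →ₗ[ℝ] X := (T : X →ₗ[ℝ] X) - ‖T‖ • LinearMap.id with hLdef
  have hLx : L x = 0 := by simp [hLdef, heig]
  have hxne : x ≠ 0 := by
    intro h; rw [h, norm_zero] at hx; norm_num at hx
  have hLni : ¬ Function.Injective L := by
    intro h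
    exact hxne (h (by simpa using hLx))
  have hLns : ¬ Function.Surjective L := by
    rwa [← LinearMap.injective_iff_surjective]
  have hlt : LinearMap.range L < ⊤ := by
    rw [lt_top_iff_ne_top]
    intro h
    exact hLns (LinearMap.range_eq_top.1 h)
  obtain ⟨f, hf0, hfmap⟩ := (LinearMap.range L).exists_dual_map_eq_bot_of_lt_top hlt inferInstance
  have hfL : ∀ y : X, f (L y) = 0 := by
    intro y
    have : f (L y) ∈ (LinearMap.range L).map f :=
      Submodule.mem_map_of_mem (LinearMap.mem_range_self L y)
    rw [hfmap] at this
    simpa using this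
  refine ⟨LinearMap.ker f, ?_, ?_⟩
  · intro h hh
    rw [LinearMap.mem_ker] at hh ⊢
    have hTh : (T : X →ₗ[ℝ] X) h = L h + ‖T‖ • h := by simp [hLdef]
    have : T h = L h + ‖T‖ • h := hTh
    rw [this, map_add, map_smul, hfL, hh, smul_zero, add_zero]
  · have hsurj : Function.Surjective f := by
      obtain ⟨y, hy⟩ : ∃ y, f y ≠ 0 := by
        by_contra h
        push_neg at h
        exact hf0 (LinearMap.ext fun y => by simp [h y])
      intro c
      exact ⟨(c / f y) • y, by simp only [map_smul, smul_eq_mul]; field_simp⟩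
    have e := f.quotKerEquivOfSurjective hsurj
    rw [e.finrank_eq, Module.finrank_self]
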